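/- For every n ≥ 1 and every m ≥ 1, the coefficients of the monic matrix orthogonal polynomials and the moment coefficients b_{n,k} satisfy Σ_{j=0}^m a_{n,n-m+j}·b_{n-1,n+j-1}* = Σ_{j=0}^m b_{n,n+m-j-1}·a_{n-1,n-j}*. -/

import Mathlib

set_option maxHeartbeats 1000000


open MeasureTheory Matrix Complex Finset
open scoped ComplexOrder

/-- Entrywise integral of a matrix-valued function over an interval `(a, b)`. -/
noncomputable def mint {N : ℕ} (a b : ℝ) (F : ℝ → Matrix (Fin N) (Fin N) ℂ) :
    Matrix (Fin N) (Fin N) ℂ :=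
  Matrix.of fun i j => ∫ x in a..b, F x i j

theorem stmt8
    (N : ℕ) (hN : 1 ≤ N) (a b : ℝ) (hab : a < b)
    (W : ℝ → Matrix (Fin N) (Fin N) ℂ)
    (hWcont : ContinuousOn W (Set.Ioo a b))
    (hWpos : ∀ x ∈ Set.Ioo a b, (W x).PosDef)
    (hWmom : ∀ (n : ℕ) (i j : Fin N),
      IntegrableOn (fun x : ℝ => |x| ^ n * ‖W x i j‖) (Set.Ioo a b))
    (hWnt : ∀ (d : ℕ) (c : Fin (d + 1) → Matrix (Fin N) (Fin N) ℂ), (∃ k, c k ≠ 0) →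
      IsUnit (mint a b (fun x =>
        (∑ k : Fin (d + 1), ((x : ℂ) ^ (k : ℕ)) • c k) * W x * (∑ k : Fin (d + 1), ((x : ℂ) ^ (k : ℕ)) • c k)ᴴ)))
    (aC : ℕ → ℤ → Matrix (Fin N) (Fin N) ℂ)
    (haDiag : ∀ n : ℕ, aC n n = 1)
    (haHigh : ∀ (n : ℕ) (j : ℤ), (n : ℤ) < j → aC n j = 0)
    (haLow : ∀ (n : ℕ) (j : ℤ), j < 0 → aC n j = 0)
    (P : ℕ → ℂ → Matrix (Fin N) (Fin N) ℂ)
    (hP : ∀ (n : ℕ) (z : ℂ), P n z = ∑ j ∈ Finset.range (n + 1), z ^ j • aC n j)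
    (horth : ∀ n j : ℕ, j < n →
      mint a b (fun x => ((x : ℂ) ^ j) • (P n (x : ℂ) * W x)) = 0)
    (bC : ℕ → ℤ → Matrix (Fin N) (Fin N) ℂ)
    (hb : ∀ (n k : ℕ), bC n (k : ℤ) = mint a b (fun x => ((x : ℂ) ^ k) • (P n (x : ℂ) * W x)))
    (hbLow : ∀ (n : ℕ) (k : ℤ), k < 0 → bC n k = 0)
 :
    ∀ n : ℕ, 1 ≤ n → ∀ m : ℕ, 1 ≤ m →
      ∑ j ∈ Finset.range (m + 1), aC n ((n : ℤ) - (m : ℤ) + (j : ℤ)) *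
          (bC (n - 1) ((n : ℤ) + (j : ℤ) - 1))ᴴ =
        ∑ j ∈ Finset.range (m + 1), bC n ((n : ℤ) + (m : ℤ) - (j : ℤ) - 1) *
          (aC (n - 1) ((n : ℤ) - (j : ℤ)))ᴴ := by
  have hcont : ∀ i j : Fin N, ContinuousOn (fun x => W x i j) (Set.Ioo a b) := by
    intro i j
    exact ((continuous_apply j).comp (continuous_apply i)).comp_continuousOn hWcont
  have hInt : ∀ (k : ℕ) (i j : Fin N),
      IntervalIntegrable (fun x : ℝ => (x:ℂ)^k * W x i j) volume a b := by
    intro k i j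
    rw [intervalIntegrable_iff, Set.uIoc_of_le hab.le,
      integrableOn_Ioc_iff_integrableOn_Ioo]
    have hmeas : AEStronglyMeasurable (fun x : ℝ => (x:ℂ)^k * W x i j)
        (volume.restrict (Set.Ioo a b)) :=
      (((Complex.continuous_ofReal.pow k).continuousOn).mul (hcont i j)).aestronglyMeasurable
        measurableSet_Ioo
    refine (hWmom k i j).mono' hmeas ?_
    filter_upwards with x
    simp
  have hconj : ∀ f : ℝ → ℂ,
      (starRingEnd ℂ) (∫ x in a..b, f x) = ∫ x in a..b, (starRingEnd ℂ) (f x) := by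
    intro f
    rw [intervalIntegral.integral_of_le hab.le, intervalIntegral.integral_of_le hab.le,
      integral_conj]
  have hne : ∀ᵐ x : ℝ ∂(volume : Measure ℝ), x ≠ b := by
    simp only [MeasureTheory.ae_iff, not_not, Set.setOf_eq_eq_singleton]
    exact measure_singleton b
  have hmap : ∀ (c : ℤ) (k : ℕ) (F : ℤ → Matrix (Fin N) (Fin N) ℂ),
      ∑ j ∈ Finset.range (k+1), F (c + j) = ∑ l ∈ Finset.Icc c (c + k), F l := by
    intro c k F
    have he : Finset.Icc c (c + (k:ℤ)) =
        (Finset.range (k+1)).map ⟨(fun j : ℕ => c + (j:ℤ)), fun x y hxy => by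
          simp only [] at hxy; omega⟩ := by
      ext x
      simp only [Finset.mem_Icc, Finset.mem_map, Finset.mem_range, Function.Embedding.coeFn_mk]
      constructor
      · intro hx; exact ⟨(x - c).toNat, by omega, by show c + (((x - c).toNat : ℕ) : ℤ) = x; omega⟩
      · rintro ⟨j, hj, rfl⟩; show c ≤ c + (j:ℤ) ∧ c + (j:ℤ) ≤ c + (k:ℤ); omega
    rw [he, Finset.sum_map]
    rfl
  have hmap' : ∀ (c : ℤ) (k : ℕ) (F : ℤ → Matrix (Fin N) (Fin N) ℂ),
      ∑ j ∈ Finset.range (k+1), F (c - j) = ∑ l ∈ Finset.Icc (c - k) c, F l := by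
    intro c k F
    have he : Finset.Icc (c - (k:ℤ)) c =
        (Finset.range (k+1)).map ⟨(fun j : ℕ => c - (j:ℤ)), fun x y hxy => by
          simp only [] at hxy; omega⟩ := by
      ext x
      simp only [Finset.mem_Icc, Finset.mem_map, Finset.mem_range, Function.Embedding.coeFn_mk]
      constructor
      · intro hx; exact ⟨(c - x).toNat, by omega, by show c - (((c - x).toNat : ℕ) : ℤ) = x; omega⟩
      · rintro ⟨j, hj, rfl⟩; show c - (k:ℤ) ≤ c - (j:ℤ) ∧ c - (j:ℤ) ≤ c; omega
    rw [he, Finset.sum_map]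
    rfl
  have hmap0 : ∀ (k : ℕ) (F : ℤ → Matrix (Fin N) (Fin N) ℂ),
      ∑ j ∈ Finset.range (k+1), F (j:ℤ) = ∑ l ∈ Finset.Icc (0:ℤ) k, F l := by
    intro k F
    simpa using hmap 0 k F
  -- entrywise expansion of the integrand
  have hEntry : ∀ (ν k : ℕ) (i j : Fin N) (x : ℝ),
      (((x:ℂ)^k) • (P ν (x:ℂ) * W x)) i j
        = ∑ l ∈ Finset.range (ν+1), ∑ p : Fin N,
            aC ν (l:ℤ) i p * ((x:ℂ)^(k+l) * W x p j) := by
    intro ν k i j x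
    simp only [hP, Finset.sum_mul, smul_mul_assoc, Finset.smul_sum, smul_smul, ← pow_add,
      Matrix.sum_apply, Matrix.smul_apply, Matrix.mul_apply, smul_eq_mul, Finset.mul_sum]
    refine Finset.sum_congr rfl fun l _ => Finset.sum_congr rfl fun p _ => by ring
  have hbM : ∀ (ν k : ℕ), bC ν (k:ℤ)
      = ∑ l ∈ Finset.range (ν+1), aC ν (l:ℤ)
          * mint a b (fun x => ((x:ℂ)^(k+l)) • W x) := by
    intro ν k
    rw [hb]
    ext i j
    show (∫ x in a..b, (((x:ℂ)^k) • (P ν (x:ℂ) * W x)) i j) = _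
    rw [intervalIntegral.integral_congr (g := fun x : ℝ => ∑ l ∈ Finset.range (ν+1),
        ∑ p : Fin N, aC ν (l:ℤ) i p * ((x:ℂ)^(k+l) * W x p j)) (fun x _ => hEntry ν k i j x)]
    have hIS : ∀ (k' : ℕ), IntervalIntegrable (fun x : ℝ => ∑ p : Fin N,
        aC ν (k':ℤ) i p * ((x:ℂ)^(k+k') * W x p j)) volume a b := by
      intro k'
      rw [intervalIntegrable_iff]
      exact MeasureTheory.integrable_finset_sum _ fun p _ =>
        ((intervalIntegrable_iff.mp (hInt (k+k') p j)).const_mul _)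
    rw [intervalIntegral.integral_finset_sum (fun l _ => hIS l)]
    have step : ∀ l ∈ Finset.range (ν+1), (∫ x in a..b, ∑ p : Fin N,
          aC ν (l:ℤ) i p * ((x:ℂ)^(k+l) * W x p j))
        = ∑ p : Fin N, aC ν (l:ℤ) i p * ∫ x in a..b, (x:ℂ)^(k+l) * W x p j := by
      intro l _
      rw [intervalIntegral.integral_finset_sum (fun p _ =>
        intervalIntegrable_iff.mpr ((intervalIntegrable_iff.mp (hInt (k+l) p j)).const_mul _))]
      exact Finset.sum_congr rfl fun p _ => intervalIntegral.integral_const_mul _ _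
    rw [Finset.sum_congr rfl step]
    simp only [Matrix.sum_apply, Matrix.mul_apply, mint, Matrix.of_apply,
      Matrix.smul_apply, smul_eq_mul]
  have hMH : ∀ k : ℕ, (mint a b (fun x => ((x:ℂ)^k) • W x))ᴴ
      = mint a b (fun x => ((x:ℂ)^k) • W x) := by
    intro k
    ext i j
    rw [Matrix.conjTranspose_apply]
    show (starRingEnd ℂ) (mint a b (fun x => ((x:ℂ)^k) • W x) j i) = _
    show (starRingEnd ℂ) (∫ x in a..b, (((x:ℂ)^k) • W x) j i)
      = ∫ x in a..b, (((x:ℂ)^k) • W x) i j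
    rw [hconj]
    refine intervalIntegral.integral_congr_ae ?_
    filter_upwards [hne] with x hx hxI
    rw [Set.uIoc_of_le hab.le] at hxI
    have hxo : x ∈ Set.Ioo a b := ⟨hxI.1, lt_of_le_of_ne hxI.2 hx⟩
    have hH : (W x)ᴴ = W x := (hWpos x hxo).1
    have hwc : (starRingEnd ℂ) (W x j i) = W x i j := by
      have := congrArg (fun M => M i j) hH
      simpa [Matrix.conjTranspose_apply] using this
    simp only [Matrix.smul_apply, smul_eq_mul]
    rw [← Complex.ofReal_pow, _root_.map_mul, Complex.conj_ofReal, hwc]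
  have hbMH : ∀ (ν k : ℕ), (bC ν (k:ℤ))ᴴ
      = ∑ l ∈ Finset.range (ν+1), mint a b (fun x => ((x:ℂ)^(k+l)) • W x)
        * (aC ν (l:ℤ))ᴴ := by
    intro ν k
    rw [hbM ν k, Matrix.conjTranspose_sum]
    exact Finset.sum_congr rfl fun l _ => by rw [Matrix.conjTranspose_mul, hMH]
  have hbz : ∀ (ν k : ℕ), k < ν → bC ν (k:ℤ) = 0 := by
    intro ν k hk
    rw [hb, horth ν k hk]
  intro n hn m hm
  -- vanishing lemmas
  have hgL : ∀ l : ℤ, l < (n:ℤ) - m →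
      aC n l * (bC (n-1) (l + (m:ℤ) - 1))ᴴ = 0 := by
    intro l hl
    rcases lt_or_ge l 0 with h0 | h0
    · rw [haLow n l h0, zero_mul]
    · have hk : (((l + m - 1).toNat : ℕ) : ℤ) = l + (m:ℤ) - 1 := by omega
      have hz : bC (n-1) (l + (m:ℤ) - 1) = 0 := by
        rw [← hk]; exact hbz (n-1) _ (by omega)
      rw [hz, Matrix.conjTranspose_zero, mul_zero]
  have hgneg : ∀ l : ℤ, l < 0 → aC n l * (bC (n-1) (l + (m:ℤ) - 1))ᴴ = 0 := by
    intro l hl; rw [haLow n l hl, zero_mul]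
  have hgH : ∀ l : ℤ, (n:ℤ) < l → aC n l * (bC (n-1) (l + (m:ℤ) - 1))ᴴ = 0 := by
    intro l hl; rw [haHigh n l hl, zero_mul]
  have hhL : ∀ p : ℤ, p < (n:ℤ) - m →
      bC n (p + (m:ℤ) - 1) * (aC (n-1) p)ᴴ = 0 := by
    intro p hp
    rcases lt_or_ge p 0 with h0 | h0
    · rw [haLow (n-1) p h0, Matrix.conjTranspose_zero, mul_zero]
    · have hk : (((p + m - 1).toNat : ℕ) : ℤ) = p + (m:ℤ) - 1 := by omega
      have hz : bC n (p + (m:ℤ) - 1) = 0 := by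
        rw [← hk]; exact hbz n _ (by omega)
      rw [hz, zero_mul]
  have hhneg : ∀ p : ℤ, p < 0 → bC n (p + (m:ℤ) - 1) * (aC (n-1) p)ᴴ = 0 := by
    intro p hp; rw [haLow (n-1) p hp, Matrix.conjTranspose_zero, mul_zero]
  have hhH : ∀ p : ℤ, ((n:ℤ) - 1) < p → bC n (p + (m:ℤ) - 1) * (aC (n-1) p)ᴴ = 0 := by
    intro p hp
    have : ((n-1 : ℕ) : ℤ) < p := by omega
    rw [haHigh (n-1) p this, Matrix.conjTranspose_zero, mul_zero]
  -- LHS chain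
  have hL : ∑ j ∈ Finset.range (m + 1), aC n ((n : ℤ) - (m : ℤ) + (j : ℤ)) *
        (bC (n - 1) ((n : ℤ) + (j : ℤ) - 1))ᴴ
      = ∑ l ∈ Finset.range (n+1),
          aC n (l:ℤ) * (bC (n-1) ((l:ℤ) + (m:ℤ) - 1))ᴴ := by
    calc ∑ j ∈ Finset.range (m + 1), aC n ((n : ℤ) - (m : ℤ) + (j : ℤ)) *
          (bC (n - 1) ((n : ℤ) + (j : ℤ) - 1))ᴴ
        = ∑ j ∈ Finset.range (m + 1),
            (fun l : ℤ => aC n l * (bC (n-1) (l + (m:ℤ) - 1))ᴴ) (((n:ℤ) - m) + j) := by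
          refine Finset.sum_congr rfl fun j _ => ?_
          simp only []
          rw [show ((n:ℤ) - m + j) + (m:ℤ) - 1 = (n:ℤ) + (j:ℤ) - 1 by ring]
      _ = ∑ l ∈ Finset.Icc ((n:ℤ) - m) ((n:ℤ) - m + m),
            aC n l * (bC (n-1) (l + (m:ℤ) - 1))ᴴ :=
          hmap ((n:ℤ) - m) m (fun l : ℤ => aC n l * (bC (n-1) (l + (m:ℤ) - 1))ᴴ)
      _ = ∑ l ∈ Finset.Icc ((n:ℤ) - m) (n:ℤ),
            aC n l * (bC (n-1) (l + (m:ℤ) - 1))ᴴ := by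
          rw [show (n:ℤ) - m + m = (n:ℤ) by ring]
      _ = ∑ l ∈ Finset.Icc (min ((n:ℤ) - m) 0) (n:ℤ),
            aC n l * (bC (n-1) (l + (m:ℤ) - 1))ᴴ := by
          refine Finset.sum_subset (Finset.Icc_subset_Icc_left (min_le_left _ _)) ?_
          intro x hx hnx
          simp only [Finset.mem_Icc] at hx hnx
          exact hgL x (by omega)
      _ = ∑ l ∈ Finset.Icc (0:ℤ) (n:ℤ),
            aC n l * (bC (n-1) (l + (m:ℤ) - 1))ᴴ := by
          refine (Finset.sum_subset (Finset.Icc_subset_Icc_left (min_le_right _ _)) ?_).symm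
          intro x hx hnx
          simp only [Finset.mem_Icc] at hx hnx
          exact hgneg x (by omega)
      _ = _ := (hmap0 n (fun l : ℤ => aC n l * (bC (n-1) (l + (m:ℤ) - 1))ᴴ)).symm
  -- RHS chain
  have hR : ∑ j ∈ Finset.range (m + 1), bC n ((n : ℤ) + (m : ℤ) - (j : ℤ) - 1) *
        (aC (n - 1) ((n : ℤ) - (j : ℤ)))ᴴ
      = ∑ p ∈ Finset.range n,
          bC n ((p:ℤ) + (m:ℤ) - 1) * (aC (n-1) (p:ℤ))ᴴ := by
    calc ∑ j ∈ Finset.range (m + 1), bC n ((n : ℤ) + (m : ℤ) - (j : ℤ) - 1) *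
          (aC (n - 1) ((n : ℤ) - (j : ℤ)))ᴴ
        = ∑ j ∈ Finset.range (m + 1),
            (fun p : ℤ => bC n (p + (m:ℤ) - 1) * (aC (n-1) p)ᴴ) ((n:ℤ) - j) := by
          refine Finset.sum_congr rfl fun j _ => ?_
          simp only []
          rw [show ((n:ℤ) - j) + (m:ℤ) - 1 = (n:ℤ) + (m:ℤ) - (j:ℤ) - 1 by ring]
      _ = ∑ p ∈ Finset.Icc ((n:ℤ) - m) (n:ℤ),
            bC n (p + (m:ℤ) - 1) * (aC (n-1) p)ᴴ :=
          hmap' (n:ℤ) m (fun p : ℤ => bC n (p + (m:ℤ) - 1) * (aC (n-1) p)ᴴ)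
      _ = ∑ p ∈ Finset.Icc (min ((n:ℤ) - m) 0) (n:ℤ),
            bC n (p + (m:ℤ) - 1) * (aC (n-1) p)ᴴ := by
          refine Finset.sum_subset (Finset.Icc_subset_Icc_left (min_le_left _ _)) ?_
          intro x hx hnx
          simp only [Finset.mem_Icc] at hx hnx
          exact hhL x (by omega)
      _ = ∑ p ∈ Finset.Icc (0:ℤ) (n:ℤ),
            bC n (p + (m:ℤ) - 1) * (aC (n-1) p)ᴴ := by
          refine (Finset.sum_subset (Finset.Icc_subset_Icc_left (min_le_right _ _)) ?_).symm
          intro x hx hnx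
          simp only [Finset.mem_Icc] at hx hnx
          exact hhneg x (by omega)
      _ = ∑ p ∈ Finset.range (n+1),
            bC n ((p:ℤ) + (m:ℤ) - 1) * (aC (n-1) (p:ℤ))ᴴ := (hmap0 n (fun p : ℤ => bC n (p + (m:ℤ) - 1) * (aC (n-1) p)ᴴ)).symm
      _ = _ := by
          rw [Finset.sum_range_succ, hhH (n:ℤ) (by omega), add_zero]
  rw [hL, hR]
  -- middle: expand via moment matrices
  have hrn : n - 1 + 1 = n := Nat.sub_add_cancel hn
  calc ∑ l ∈ Finset.range (n+1), aC n (l:ℤ) * (bC (n-1) ((l:ℤ) + (m:ℤ) - 1))ᴴ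
      = ∑ l ∈ Finset.range (n+1), ∑ p ∈ Finset.range n,
          aC n (l:ℤ) * (mint a b (fun x => ((x:ℂ)^(l + p + (m-1))) • W x)
            * (aC (n-1) (p:ℤ))ᴴ) := by
        refine Finset.sum_congr rfl fun l _ => ?_
        have hcast : (((l + m - 1 : ℕ)) : ℤ) = (l:ℤ) + (m:ℤ) - 1 := by omega
        rw [← hcast, hbMH (n-1) (l + m - 1), hrn, Finset.mul_sum]
        refine Finset.sum_congr rfl fun p _ => ?_
        rw [show l + m - 1 + p = l + p + (m-1) by omega]
    _ = ∑ p ∈ Finset.range n, ∑ l ∈ Finset.range (n+1),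
          (aC n (l:ℤ) * mint a b (fun x => ((x:ℂ)^(l + p + (m-1))) • W x))
            * (aC (n-1) (p:ℤ))ᴴ := by
        rw [Finset.sum_comm]
        exact Finset.sum_congr rfl fun p _ => Finset.sum_congr rfl fun l _ =>
          (mul_assoc _ _ _).symm
    _ = ∑ p ∈ Finset.range n,
          bC n ((p:ℤ) + (m:ℤ) - 1) * (aC (n-1) (p:ℤ))ᴴ := by
        refine Finset.sum_congr rfl fun p _ => ?_
        have hcast : (((p + m - 1 : ℕ)) : ℤ) = (p:ℤ) + (m:ℤ) - 1 := by omega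
        rw [← hcast, hbM n (p + m - 1), Finset.sum_mul]
        refine Finset.sum_congr rfl fun l _ => ?_
        rw [show p + m - 1 + l = l + p + (m-1) by omega]
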